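/- arXiv:2505.11216 — 6 statements merged into one kernel-verified Lean document; each statement's English description precedes it below -/
import Mathlib

section
/- Every finite simple graph on N ≥ 1 vertices with minimum degree at least κ ≥ 1 contains a dominating set of size at most N·(1 + ln(κ + 1))/(κ + 1). -/
open Finset

lemma sum_pow_mul_pow {α : Type*} [DecidableEq α] (B : Finset α) (p q : ℝ) :
    ∑ S ∈ B.powerset, p ^ S.card * q ^ (B.card - S.card) = (p + q) ^ B.card := by
  have h := Finset.prod_add (fun _ : α => p) (fun _ => q) B
  simp only [prod_const] at h
  rw [h]
  exact Finset.sum_congr rfl fun S hS => by rw [card_sdiff_of_subset (mem_powerset.mp hS)]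

lemma key_lemma {α : Type*} [Fintype α] [DecidableEq α] (p : ℝ) (A : Finset α) :
    ∑ S ∈ Aᶜ.powerset, p ^ S.card * (1 - p) ^ (Fintype.card α - S.card)
      = (1 - p) ^ A.card := by
  have hA : A.card ≤ Fintype.card α := A.card_le_univ
  have hc : Aᶜ.card = Fintype.card α - A.card := by
    simp [Finset.card_compl]
  have step : ∀ S ∈ Aᶜ.powerset,
      p ^ S.card * (1 - p) ^ (Fintype.card α - S.card)
        = (1 - p) ^ A.card * (p ^ S.card * (1 - p) ^ (Aᶜ.card - S.card)) := by
    intro S hS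
    have h1 : S.card ≤ Aᶜ.card := card_le_card (mem_powerset.mp hS)
    have h2 : Fintype.card α - S.card = A.card + (Aᶜ.card - S.card) := by omega
    rw [h2, pow_add]; ring
  rw [Finset.sum_congr rfl step, ← Finset.mul_sum, sum_pow_mul_pow]
  norm_num

/-- Every finite simple graph on `N ≥ 1` vertices with minimum degree at
least `κ ≥ 1` contains a dominating set of size at most `N·(1 + ln(κ + 1))/(κ + 1)`. -/
theorem exists_small_dominating_set
    {V : Type*} [Fintype V] (G : SimpleGraph V) [DecidableRel G.Adj]
    (N κ : ℕ) (hN : Fintype.card V = N) (hN1 : 1 ≤ N) (hκ : 1 ≤ κ)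
    (hdeg : ∀ v : V, κ ≤ G.degree v) :
    ∃ D : Finset V, (∀ v : V, v ∉ D → ∃ u ∈ D, G.Adj u v) ∧
      (D.card : ℝ) ≤ N * (1 + Real.log (κ + 1)) / (κ + 1) := by
  classical
  subst hN
  set n : ℕ := Fintype.card V with hn
  have hκ1 : (1:ℝ) < (κ:ℝ) + 1 := by
    have : (1:ℝ) ≤ (κ:ℝ) := by exact_mod_cast hκ
    linarith
  set p : ℝ := Real.log ((κ:ℝ) + 1) / ((κ:ℝ) + 1) with hp
  have hp0 : 0 < p := div_pos (Real.log_pos hκ1) (by linarith)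
  have hp1 : p < 1 := by
    rw [hp, div_lt_one (by linarith)]
    have h := Real.log_lt_sub_one_of_pos (show (0:ℝ) < (κ:ℝ)+1 by linarith)
      (by intro h; rw [h] at hκ1; exact lt_irrefl 1 hκ1)
    linarith
  set q : ℝ := 1 - p with hq
  have hq0 : 0 < q := by rw [hq]; linarith
  have hq1 : q ≤ 1 := by rw [hq]; linarith
  set w : Finset V → ℝ := fun S => p ^ S.card * q ^ (n - S.card) with hw
  have hwpos : ∀ S : Finset V, 0 < w S := fun S => mul_pos (pow_pos hp0 _) (pow_pos hq0 _)
  have key : ∀ A : Finset V, ∑ S ∈ Aᶜ.powerset, w S = q ^ A.card := fun A => key_lemma p A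
  have total : ∑ S ∈ (univ : Finset V).powerset, w S = 1 := by
    have h := key ∅
    simpa using h
  -- marginal: probability that v ∈ S
  have memP : ∀ v : V,
      ∑ S ∈ (univ : Finset V).powerset.filter (fun S => v ∈ S), w S = p := by
    intro v
    have h1 : (univ : Finset V).powerset.filter (fun S => ¬ v ∈ S)
        = ({v}ᶜ : Finset V).powerset := by
      ext S
      simp only [mem_filter, mem_powerset, subset_univ, true_and, Finset.subset_compl_singleton]
    have h2 := Finset.sum_filter_add_sum_filter_not
      (univ : Finset V).powerset (fun S => v ∈ S) w
    rw [total, h1, key {v}] at h2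
    simp only [card_singleton, pow_one, hq] at h2
    linarith
  -- marginal: probability that v is uncovered
  have uncovP : ∀ v : V,
      ∑ S ∈ (univ : Finset V).powerset.filter
        (fun S => v ∉ S ∧ ∀ u ∈ S, ¬ G.Adj u v), w S = q ^ (G.degree v + 1) := by
    intro v
    have h1 : (univ : Finset V).powerset.filter (fun S => v ∉ S ∧ ∀ u ∈ S, ¬ G.Adj u v)
        = ((insert v (G.neighborFinset v))ᶜ).powerset := by
      ext S
      simp only [mem_filter, mem_powerset, subset_univ, true_and]
      constructor
      · rintro ⟨hvS, hadj⟩ x hxS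
        simp only [mem_compl, mem_insert, SimpleGraph.mem_neighborFinset, not_or]
        exact ⟨fun h => hvS (h ▸ hxS), fun h => hadj x hxS h.symm⟩
      · intro h
        constructor
        · intro hvS
          have := h hvS
          simp at this
        · intro u huS hadj
          have hu := h huS
          simp only [mem_compl, mem_insert, SimpleGraph.mem_neighborFinset, not_or] at hu
          exact hu.2 hadj.symm
    rw [h1, key]
    congr 1
    rw [card_insert_of_notMem (by simp), SimpleGraph.card_neighborFinset_eq_degree]
  set U : Finset V → Finset V :=
    fun S => univ.filter (fun v => v ∉ S ∧ ∀ u ∈ S, ¬ G.Adj u v) with hU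
  have Esum : ∑ S ∈ (univ : Finset V).powerset, w S * ((S.card : ℝ) + ((U S).card : ℝ))
      = (n : ℝ) * p + ∑ v : V, q ^ (G.degree v + 1) := by
    have e0 : ∀ (S : Finset V) (T : Finset V),
        w S * (T.card : ℝ) = ∑ v : V, if v ∈ T then w S else 0 := by
      intro S T
      rw [Finset.sum_ite_mem, Finset.univ_inter, Finset.sum_const, nsmul_eq_mul, mul_comm]
    have e1 : ∑ S ∈ (univ : Finset V).powerset, w S * (S.card : ℝ) = (n : ℝ) * p := by
      calc ∑ S ∈ (univ : Finset V).powerset, w S * (S.card : ℝ)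
          = ∑ S ∈ (univ : Finset V).powerset, ∑ v : V, if v ∈ S then w S else 0 :=
            Finset.sum_congr rfl fun S _ => e0 S S
        _ = ∑ v : V, ∑ S ∈ (univ : Finset V).powerset, if v ∈ S then w S else 0 :=
            Finset.sum_comm
        _ = ∑ v : V, ∑ S ∈ (univ : Finset V).powerset.filter (fun S => v ∈ S), w S :=
            Finset.sum_congr rfl fun v _ => (Finset.sum_filter _ _).symm
        _ = ∑ _v : V, p := Finset.sum_congr rfl fun v _ => memP v
        _ = (n : ℝ) * p := by rw [Finset.sum_const, card_univ, nsmul_eq_mul]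
    have e2 : ∑ S ∈ (univ : Finset V).powerset, w S * ((U S).card : ℝ)
        = ∑ v : V, q ^ (G.degree v + 1) := by
      calc ∑ S ∈ (univ : Finset V).powerset, w S * ((U S).card : ℝ)
          = ∑ S ∈ (univ : Finset V).powerset, ∑ v : V, if v ∈ U S then w S else 0 :=
            Finset.sum_congr rfl fun S _ => e0 S (U S)
        _ = ∑ v : V, ∑ S ∈ (univ : Finset V).powerset, if v ∈ U S then w S else 0 :=
            Finset.sum_comm
        _ = ∑ v : V, ∑ S ∈ (univ : Finset V).powerset.filter (fun S => v ∈ U S), w S :=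
            Finset.sum_congr rfl fun v _ => (Finset.sum_filter _ _).symm
        _ = ∑ v : V, q ^ (G.degree v + 1) := by
            refine Finset.sum_congr rfl fun v _ => ?_
            rw [← uncovP v]
            congr 1
            ext S
            simp [hU]
    calc ∑ S ∈ (univ : Finset V).powerset, w S * ((S.card : ℝ) + ((U S).card : ℝ))
        = ∑ S ∈ (univ : Finset V).powerset,
            (w S * (S.card : ℝ) + w S * ((U S).card : ℝ)) := by
          refine Finset.sum_congr rfl fun S _ => ?_; ring
      _ = (n : ℝ) * p + ∑ v : V, q ^ (G.degree v + 1) := by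
          rw [Finset.sum_add_distrib, e1, e2]
  set E : ℝ := (n : ℝ) * p + ∑ v : V, q ^ (G.degree v + 1) with hE
  have exS : ∃ S : Finset V, ((S.card : ℝ) + ((U S).card : ℝ)) ≤ E := by
    by_contra hcon
    push_neg at hcon
    have hlt : ∑ S ∈ (univ : Finset V).powerset, w S * E
        < ∑ S ∈ (univ : Finset V).powerset, w S * ((S.card : ℝ) + ((U S).card : ℝ)) :=
      Finset.sum_lt_sum_of_nonempty ⟨∅, by simp⟩
        (fun S _ => mul_lt_mul_of_pos_left (hcon S) (hwpos S))
    rw [← Finset.sum_mul, total, one_mul, Esum] at hlt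
    exact lt_irrefl E hlt
  obtain ⟨S, hS⟩ := exS
  refine ⟨S ∪ U S, ?_, ?_⟩
  · intro v hv
    have hvS : v ∉ S := fun h => hv (mem_union_left _ h)
    have hvU : v ∉ U S := fun h => hv (mem_union_right _ h)
    simp only [hU, mem_filter, mem_univ, true_and, not_and] at hvU
    push_neg at hvU
    obtain ⟨u, hu, hadj⟩ := hvU hvS
    exact ⟨u, mem_union_left _ hu, hadj⟩
  · have hEb : E ≤ (n : ℝ) * p + (n : ℝ) * ((1:ℝ) / ((κ:ℝ) + 1)) := by
      have hb1 : ∀ v : V, q ^ (G.degree v + 1) ≤ q ^ (κ + 1) := fun v =>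
        pow_le_pow_of_le_one hq0.le hq1 (by have := hdeg v; omega)
      have hb2 : q ^ (κ + 1) ≤ (1:ℝ) / ((κ:ℝ) + 1) := by
        have h1 : q ≤ Real.exp (-p) := by
          have := Real.add_one_le_exp (-p)
          rw [hq]; linarith
        have h2 : q ^ (κ + 1) ≤ Real.exp (-p) ^ (κ + 1) :=
          pow_le_pow_left₀ hq0.le h1 _
        have h3 : Real.exp (-p) ^ (κ + 1) = Real.exp (-(p * ((κ:ℝ) + 1))) := by
          rw [← Real.exp_nat_mul]
          congr 1
          push_cast
          ring
        have h4 : p * ((κ:ℝ) + 1) = Real.log ((κ:ℝ) + 1) :=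
          div_mul_cancel₀ _ (by linarith)
        have h5 : Real.exp (-(Real.log ((κ:ℝ) + 1))) = 1 / ((κ:ℝ) + 1) := by
          rw [Real.exp_neg, Real.exp_log (by linarith), one_div]
        rw [h3, h4, h5] at h2
        exact h2
      have hsum : ∑ v : V, q ^ (G.degree v + 1) ≤ ∑ _v : V, ((1:ℝ) / ((κ:ℝ) + 1)) :=
        Finset.sum_le_sum fun v _ => le_trans (hb1 v) hb2
      rw [Finset.sum_const, card_univ, nsmul_eq_mul] at hsum
      rw [hE]
      linarith
    have hfin : (n : ℝ) * p + (n : ℝ) * ((1:ℝ) / ((κ:ℝ) + 1))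
        = (n : ℝ) * (1 + Real.log ((κ:ℝ) + 1)) / ((κ:ℝ) + 1) := by
      rw [hp]
      field_simp
      ring
    calc ((S ∪ U S).card : ℝ) ≤ ((S.card : ℝ) + ((U S).card : ℝ)) := by
          exact_mod_cast card_union_le S (U S)
      _ ≤ E := hS
      _ ≤ (n : ℝ) * p + (n : ℝ) * ((1:ℝ) / ((κ:ℝ) + 1)) := hEb
      _ = (n : ℝ) * (1 + Real.log ((κ:ℝ) + 1)) / ((κ:ℝ) + 1) := hfin
end

section
/- Let G be a finite simple graph on N vertices with minimum degree at least κ, and let 0 ≤ p ≤ 1. Form a random subset X by including each vertex independently with probability p, and let Y_X be the set of vertices v ∉ X with no neighbor in X. Then the expected value of |X| + |Y_X| is at most N·p + N·(1 − p)^(1 + κ), which is in turn at most N·p + N·e^(−p(1 + κ)). -/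
open Finset

private lemma sum_weight_ind {V : Type*} [Fintype V] [DecidableEq V] (p : ℝ) (T : Finset V) :
    ∑ X ∈ (univ : Finset V).powerset,
      p ^ X.card * (1 - p) ^ (Fintype.card V - X.card) *
        (if ∀ u ∈ T, u ∉ X then (1:ℝ) else 0) = (1 - p) ^ T.card := by
  have h : ∀ X ∈ (univ : Finset V).powerset,
      p ^ X.card * (1 - p) ^ (Fintype.card V - X.card) *
        (if ∀ u ∈ T, u ∉ X then (1:ℝ) else 0)
      = (∏ v ∈ X, (if v ∈ T then 0 else p)) * ∏ v ∈ univ \ X, (1 - p) := by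
    intro X _
    have hcard : (univ \ X).card = Fintype.card V - X.card := by
      rw [card_sdiff_of_subset (subset_univ X), card_univ]
    rw [prod_const, hcard]
    by_cases h : ∀ u ∈ T, u ∉ X
    · rw [if_pos h, mul_one]
      congr 1
      rw [prod_congr rfl fun v hv => if_neg fun hvT => h v hvT hv, prod_const]
    · rw [if_neg h, mul_zero]
      push_neg at h
      obtain ⟨u, huT, huX⟩ := h
      rw [Finset.prod_eq_zero huX (show (if u ∈ T then (0:ℝ) else p) = 0 from if_pos huT), zero_mul]
  rw [Finset.sum_congr rfl h, ← Finset.prod_add]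
  calc ∏ v, ((if v ∈ T then (0:ℝ) else p) + (1 - p))
      = ∏ v, (if v ∈ T then (1 - p) else 1) := by
        apply prod_congr rfl; intro v _; split <;> ring
    _ = (1 - p) ^ T.card := by
        rw [prod_ite_mem, univ_inter, prod_const]

private lemma sum_weight_mem {V : Type*} [Fintype V] [DecidableEq V] (p : ℝ) (v : V) :
    ∑ X ∈ (univ : Finset V).powerset,
      p ^ X.card * (1 - p) ^ (Fintype.card V - X.card) *
        (if v ∈ X then (1:ℝ) else 0) = p := by
  have h : ∀ X ∈ (univ : Finset V).powerset,
      p ^ X.card * (1 - p) ^ (Fintype.card V - X.card) *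
        (if v ∈ X then (1:ℝ) else 0)
      = (∏ u ∈ X, p) * ∏ u ∈ univ \ X, (if u = v then 0 else (1 - p)) := by
    intro X _
    have hcard : (univ \ X).card = Fintype.card V - X.card := by
      rw [card_sdiff_of_subset (subset_univ X), card_univ]
    rw [prod_const]
    by_cases h : v ∈ X
    · rw [if_pos h, mul_one]
      congr 1
      rw [prod_congr rfl fun u hu => if_neg fun huv => (mem_sdiff.mp hu).2 (huv ▸ h),
        prod_const, hcard]
    · rw [if_neg h, mul_zero]
      rw [Finset.prod_eq_zero (mem_sdiff.mpr ⟨mem_univ v, h⟩) (show (if v = v then (0:ℝ) else 1-p) = 0 from if_pos rfl), mul_zero]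
  rw [Finset.sum_congr rfl h, ← Finset.prod_add]
  calc ∏ u, (p + (if u = v then (0:ℝ) else 1 - p))
      = ∏ u, (if u = v then p else 1) := by
        apply prod_congr rfl; intro u _; split <;> ring
    _ = p := by rw [prod_ite_eq', if_pos (mem_univ v)]

/-- For a finite simple graph `G` on `N` vertices with minimum degree at
least `κ`, if a random subset `X` is formed by including each vertex independently with
probability `p` (so a subset `S` has probability `p^|S|·(1-p)^(N-|S|)`), and `Y_X` is the
set of vertices `v ∉ X` with no neighbor in `X`, then
`E[|X| + |Y_X|] ≤ N·p + N·(1-p)^(1+κ) ≤ N·p + N·e^(-p(1+κ))`. -/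
theorem expected_size_le
    {V : Type*} [Fintype V] [DecidableEq V] (G : SimpleGraph V) [DecidableRel G.Adj]
    (N κ : ℕ) (hN : Fintype.card V = N) (hdeg : ∀ v : V, κ ≤ G.degree v)
    (p : ℝ) (hp0 : 0 ≤ p) (hp1 : p ≤ 1) :
    (∑ X ∈ (Finset.univ : Finset V).powerset,
        p ^ X.card * (1 - p) ^ (N - X.card) *
          ((X.card : ℝ) +
            ((Finset.univ.filter
                fun v : V => v ∉ X ∧ ∀ u ∈ G.neighborFinset v, u ∉ X).card : ℝ)))
      ≤ N * p + N * (1 - p) ^ (1 + κ) ∧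
    (N : ℝ) * p + N * (1 - p) ^ (1 + κ) ≤ N * p + N * Real.exp (-p * (1 + κ)) := by
  subst hN
  have hq0 : (0:ℝ) ≤ 1 - p := by linarith
  have hq1 : (1:ℝ) - p ≤ 1 := by linarith
  constructor
  · have expand : ∀ X : Finset V,
        p ^ X.card * (1 - p) ^ (Fintype.card V - X.card) *
          ((X.card : ℝ) +
            ((Finset.univ.filter
                fun v : V => v ∉ X ∧ ∀ u ∈ G.neighborFinset v, u ∉ X).card : ℝ))
        = (∑ v : V, p ^ X.card * (1 - p) ^ (Fintype.card V - X.card) *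
            (if v ∈ X then (1:ℝ) else 0))
          + ∑ v : V, p ^ X.card * (1 - p) ^ (Fintype.card V - X.card) *
            (if ∀ u ∈ insert v (G.neighborFinset v), u ∉ X then (1:ℝ) else 0) := by
      intro X
      rw [← Finset.mul_sum, ← Finset.mul_sum, ← mul_add]
      congr 2
      · rw [Finset.sum_boole]
        congr 1
        simp [Finset.filter_mem_eq_inter]
      · rw [Finset.sum_boole]
        congr 2
        ext v
        simp [Finset.forall_mem_insert]
    rw [Finset.sum_congr rfl fun X _ => expand X, Finset.sum_add_distrib,
      Finset.sum_comm, Finset.sum_comm (s := (univ : Finset V).powerset)]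
    have h1 : ∑ v : V, ∑ X ∈ (univ : Finset V).powerset,
        p ^ X.card * (1 - p) ^ (Fintype.card V - X.card) *
          (if v ∈ X then (1:ℝ) else 0) = Fintype.card V * p := by
      rw [Finset.sum_congr rfl fun v _ => sum_weight_mem p v, Finset.sum_const,
        card_univ, nsmul_eq_mul]
    rw [h1]
    apply add_le_add (le_refl _)
    have h2 : ∀ v : V, ∑ X ∈ (univ : Finset V).powerset,
        p ^ X.card * (1 - p) ^ (Fintype.card V - X.card) *
          (if ∀ u ∈ insert v (G.neighborFinset v), u ∉ X then (1:ℝ) else 0)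
        ≤ (1 - p) ^ (1 + κ) := by
      intro v
      rw [sum_weight_ind p (insert v (G.neighborFinset v))]
      apply pow_le_pow_of_le_one hq0 hq1
      rw [card_insert_of_notMem (G.notMem_neighborFinset_self v),
        SimpleGraph.card_neighborFinset_eq_degree]
      have := hdeg v
      omega
    calc ∑ v : V, ∑ X ∈ (univ : Finset V).powerset,
        p ^ X.card * (1 - p) ^ (Fintype.card V - X.card) *
          (if ∀ u ∈ insert v (G.neighborFinset v), u ∉ X then (1:ℝ) else 0)
        ≤ ∑ v : V, (1 - p) ^ (1 + κ) := Finset.sum_le_sum fun v _ => h2 v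
      _ = Fintype.card V * (1 - p) ^ (1 + κ) := by
          rw [Finset.sum_const, card_univ, nsmul_eq_mul]
  · apply add_le_add (le_refl _)
    apply mul_le_mul_of_nonneg_left _ (Nat.cast_nonneg _)
    have h1 : 1 - p ≤ Real.exp (-p) := by
      have := Real.add_one_le_exp (-p); linarith
    calc (1 - p) ^ (1 + κ) ≤ Real.exp (-p) ^ (1 + κ) := pow_le_pow_left₀ hq0 h1 _
      _ = Real.exp (-p * (1 + κ)) := by
          rw [← Real.exp_nat_mul]
          congr 1
          push_cast
          ring
end

section
/- Let a ≥ 2 be an integer and let G be a bipartite graph whose two parts V₁ and V₂ each have N vertices, and suppose G contains no complete bipartite subgraph K_{a,a} (i.e., there are no a vertices in V₁ all adjacent to a common set of a vertices in V₂). Then the number of edges of G satisfies |E(G)| ≤ (a − 1)^(1/a) · N^(2 − 1/a) + (a − 1)·N. -/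
open Finset

/-- A bipartite graph whose two parts each have `N` vertices and which
contains no complete bipartite subgraph `K_{a,a}` (for an integer `a ≥ 2`) has at most
`(a-1)^(1/a)·N^(2-1/a) + (a-1)·N` edges. -/
theorem bipartite_Kaa_free_edge_bound
    {V₁ V₂ : Type*} [Fintype V₁] [Fintype V₂] [DecidableEq V₁] [DecidableEq V₂]
    (N a : ℕ) (ha : 2 ≤ a) (h1 : Fintype.card V₁ = N) (h2 : Fintype.card V₂ = N)
    (E : Finset (V₁ × V₂))
    (hKaa : ¬ ∃ (A : Finset V₁) (B : Finset V₂), A.card = a ∧ B.card = a ∧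
      ∀ u ∈ A, ∀ v ∈ B, (u, v) ∈ E) :
    (E.card : ℝ) ≤ (a - 1 : ℝ) ^ ((1 : ℝ) / a) * (N : ℝ) ^ ((2 : ℝ) - 1 / a)
      + (a - 1 : ℝ) * N := by
  classical
  have ha0 : (a : ℝ) ≠ 0 := by positivity
  have hEcard : E.card = ∑ v : V₂, (univ.filter (fun u => (u, v) ∈ E)).card := by
    conv_lhs => rw [← Finset.filter_univ_mem E]
    rw [Finset.card_filter, Fintype.sum_prod_type, Finset.sum_comm]
    simp only [Finset.card_filter]
  set d : V₂ → ℕ := fun v => (univ.filter (fun u => (u, v) ∈ E)).card with hd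
  -- Step 1: double counting
  have hstep1 : ∑ v : V₂, Nat.choose (d v) a ≤ (a - 1) * Nat.choose N a := by
    have key : ∑ v : V₂, Nat.choose (d v) a
        = ∑ S ∈ Finset.powersetCard a (univ : Finset V₁),
            (univ.filter (fun v : V₂ => ∀ u ∈ S, (u, v) ∈ E)).card := by
      have h1' : ∀ v : V₂, Nat.choose (d v) a
          = ((Finset.powersetCard a (univ : Finset V₁)).filter
              (fun S => ∀ u ∈ S, (u, v) ∈ E)).card := by
        intro v
        have heq : (Finset.powersetCard a (univ : Finset V₁)).filter
              (fun S => ∀ u ∈ S, (u, v) ∈ E)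
            = Finset.powersetCard a (univ.filter (fun u => (u, v) ∈ E)) := by
          ext S
          simp only [Finset.mem_filter, Finset.mem_powersetCard, Finset.subset_iff,
            Finset.mem_univ, true_and]
          tauto
        rw [heq, Finset.card_powersetCard]
      simp_rw [h1', Finset.card_filter]
      rw [Finset.sum_comm]
    rw [key]
    have hb : ∀ S ∈ Finset.powersetCard a (univ : Finset V₁),
        (univ.filter (fun v : V₂ => ∀ u ∈ S, (u, v) ∈ E)).card ≤ a - 1 := by
      intro S hS
      by_contra h
      push_neg at h
      have ha' : a ≤ (univ.filter (fun v : V₂ => ∀ u ∈ S, (u, v) ∈ E)).card := by omega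
      obtain ⟨B, hB, hBcard⟩ := Finset.exists_subset_card_eq ha'
      exact hKaa ⟨S, B, (Finset.mem_powersetCard.mp hS).2, hBcard,
        fun u hu v hv => (Finset.mem_filter.mp (hB hv)).2 u hu⟩
    calc ∑ S ∈ Finset.powersetCard a (univ : Finset V₁),
            (univ.filter (fun v : V₂ => ∀ u ∈ S, (u, v) ∈ E)).card
        ≤ ∑ _S ∈ Finset.powersetCard a (univ : Finset V₁), (a - 1) :=
          Finset.sum_le_sum hb
      _ = (a - 1) * Nat.choose N a := by
          rw [Finset.sum_const, Finset.card_powersetCard, Finset.card_univ, h1,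
            smul_eq_mul, Nat.mul_comm]
  -- Step 2: pointwise lower bound for binomial coefficients
  have hstep2 : ∀ v : V₂, (d v - (a - 1)) ^ a ≤ a.factorial * Nat.choose (d v) a := by
    intro v
    rw [← Nat.descFactorial_eq_factorial_mul_choose, Nat.descFactorial_eq_prod_range]
    calc (d v - (a - 1)) ^ a = ∏ _i ∈ Finset.range a, (d v - (a - 1)) := by
          rw [Finset.prod_const, Finset.card_range]
      _ ≤ ∏ i ∈ Finset.range a, (d v - i) := by
          apply Finset.prod_le_prod' -- ℕ version?
          intro i hi
          rw [Finset.mem_range] at hi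
          exact Nat.sub_le_sub_left (by omega : i ≤ a - 1) _
  -- combined natural-number inequality
  have hsum : ∑ v : V₂, (d v - (a - 1)) ^ a ≤ (a - 1) * N ^ a := by
    calc ∑ v : V₂, (d v - (a - 1)) ^ a
        ≤ ∑ v : V₂, a.factorial * Nat.choose (d v) a :=
          Finset.sum_le_sum fun v _ => hstep2 v
      _ = a.factorial * ∑ v : V₂, Nat.choose (d v) a := by rw [Finset.mul_sum]
      _ ≤ a.factorial * ((a - 1) * Nat.choose N a) := Nat.mul_le_mul_left _ hstep1
      _ = (a - 1) * (a.factorial * Nat.choose N a) := by ring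
      _ = (a - 1) * Nat.descFactorial N a := by
          rw [Nat.descFactorial_eq_factorial_mul_choose]
      _ ≤ (a - 1) * N ^ a := Nat.mul_le_mul_left _ (Nat.descFactorial_le_pow N a)
  -- move to the reals
  set x : V₂ → ℝ := fun v => ((d v - (a - 1) : ℕ) : ℝ) with hx
  set S : ℝ := ∑ v : V₂, x v with hS
  have hxnn : ∀ v ∈ (univ : Finset V₂), (0:ℝ) ≤ x v := fun v _ => Nat.cast_nonneg _
  have hSnn : 0 ≤ S := Finset.sum_nonneg hxnn
  have hcast : ((a - 1 : ℕ) : ℝ) = (a : ℝ) - 1 := by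
    push_cast [Nat.cast_sub (by omega : 1 ≤ a)]; ring
  -- E.card ≤ S + (a-1) N
  have hE_le : (E.card : ℝ) ≤ S + ((a : ℝ) - 1) * N := by
    have hnat : E.card ≤ (∑ v : V₂, (d v - (a - 1))) + N * (a - 1) := by
      rw [hEcard]
      calc ∑ v : V₂, d v ≤ ∑ v : V₂, ((d v - (a - 1)) + (a - 1)) :=
            Finset.sum_le_sum fun v _ => le_tsub_add
        _ = (∑ v : V₂, (d v - (a - 1))) + N * (a - 1) := by
            rw [Finset.sum_add_distrib, Finset.sum_const, Finset.card_univ, h2,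
              smul_eq_mul]
    have := (Nat.cast_le (α := ℝ)).mpr hnat
    push_cast at this
    rw [hS, hx]
    push_cast
    rw [hcast] at this
    linarith
  -- S^a ≤ (a-1) * N^(2a-1)
  rcases Nat.eq_zero_or_pos N with hN0 | hNpos
  · subst hN0
    have hV₂ : (univ : Finset V₂) = ∅ := by
      rw [← Finset.card_eq_zero, Finset.card_univ, h2]
    have hE0 : (E.card : ℝ) = 0 := by
      rw [hEcard, hV₂]; simp
    rw [hE0]
    have : ((0:ℕ) : ℝ) ^ ((2 : ℝ) - 1 / a) = 0 := by
      rw [Nat.cast_zero]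
      apply Real.zero_rpow
      have h2a : (1:ℝ)/a ≤ 1/2 := by
        apply div_le_div_of_nonneg_left one_pos.le (by norm_num)
        exact_mod_cast ha
      intro h
      linarith
    rw [this]
    have : (0:ℝ) ≤ ((a:ℝ) - 1) ^ ((1:ℝ)/a) := Real.rpow_nonneg (by
      have : (2:ℝ) ≤ a := by exact_mod_cast ha
      linarith) _
    simp
  have hNR : (0:ℝ) < (N : ℝ) := by exact_mod_cast hNpos
  have hcardV₂ : ((univ : Finset V₂).card : ℝ) = N := by
    rw [Finset.card_univ, h2]
  have hpow : S ^ a ≤ ((a : ℝ) - 1) * (N : ℝ) ^ (2 * a - 1) := by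
    obtain ⟨b, hb⟩ : ∃ b, a = b + 1 := ⟨a - 1, by omega⟩
    have hjensen := pow_sum_div_card_le_sum_pow (s := (univ : Finset V₂)) (f := x) hxnn b
    rw [hcardV₂, ← hb] at hjensen
    have hsumx : ∑ v : V₂, x v ^ a ≤ ((a:ℝ) - 1) * (N : ℝ) ^ a := by
      have := (Nat.cast_le (α := ℝ)).mpr hsum
      push_cast at this
      rw [hcast] at this
      simpa [hx] using this
    rw [div_le_iff₀ (by positivity)] at hjensen
    calc S ^ a ≤ (∑ v : V₂, x v ^ a) * (N:ℝ) ^ b := hjensen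
      _ ≤ ((a:ℝ) - 1) * (N : ℝ) ^ a * (N:ℝ) ^ b :=
          mul_le_mul_of_nonneg_right hsumx (by positivity)
      _ = ((a : ℝ) - 1) * (N : ℝ) ^ (2 * a - 1) := by
          rw [mul_assoc, ← pow_add]
          congr 2
          omega
  -- conclude: S ≤ (a-1)^(1/a) * N^(2-1/a)
  have hS_le : S ≤ ((a:ℝ) - 1) ^ ((1:ℝ)/a) * (N : ℝ) ^ ((2:ℝ) - 1/a) := by
    have ha1nn : (0:ℝ) ≤ (a:ℝ) - 1 := by
      have : (2:ℝ) ≤ a := by exact_mod_cast ha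
      linarith
    have hCnn : (0:ℝ) ≤ ((a : ℝ) - 1) * (N : ℝ) ^ (2 * a - 1) := by positivity
    have h1' : (S ^ a) ^ ((1:ℝ)/a) ≤ (((a : ℝ) - 1) * (N : ℝ) ^ (2 * a - 1)) ^ ((1:ℝ)/a) :=
      Real.rpow_le_rpow (by positivity) hpow (by positivity)
    have hSa : (S ^ a) ^ ((1:ℝ)/a) = S := by
      rw [← Real.rpow_natCast S a, ← Real.rpow_mul hSnn]
      rw [mul_one_div, div_self ha0, Real.rpow_one]
    have hC : (((a : ℝ) - 1) * (N : ℝ) ^ (2 * a - 1)) ^ ((1:ℝ)/a)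
        = ((a:ℝ) - 1) ^ ((1:ℝ)/a) * (N : ℝ) ^ ((2:ℝ) - 1/a) := by
      rw [Real.mul_rpow ha1nn (by positivity)]
      congr 1
      rw [← Real.rpow_natCast (N:ℝ) (2*a-1), ← Real.rpow_mul hNR.le]
      congr 1
      have : ((2 * a - 1 : ℕ) : ℝ) = 2 * (a:ℝ) - 1 := by
        push_cast [Nat.cast_sub (by omega : 1 ≤ 2*a)]; ring
      rw [this]
      field_simp
    rw [hSa, hC] at h1'
    exact h1'
  calc (E.card : ℝ) ≤ S + ((a:ℝ) - 1) * N := hE_le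
    _ ≤ ((a:ℝ) - 1) ^ ((1:ℝ)/a) * (N : ℝ) ^ ((2:ℝ) - 1/a) + ((a:ℝ) - 1) * N := by
        linarith
end

section
/- Let a ≥ 2 be an integer and let M be an N × N matrix with entries in {0, 1} that contains no a × a all-ones submatrix (i.e., there are no a rows and a columns such that all a² entries at their intersections equal 1). Then the number of entries of M equal to 1 is at most (a − 1)^(1/a) · N^(2 − 1/a) + (a − 1)·N. -/
/-- An `N × N` matrix with entries in `{0,1}` containing no `a × a`
all-ones submatrix (for an integer `a ≥ 2`) has at most
`(a-1)^(1/a)·N^(2-1/a) + (a-1)·N` entries equal to `1`. -/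
theorem zero_one_matrix_no_allones_submatrix_bound
    (N a : ℕ) (ha : 2 ≤ a) (M : Fin N → Fin N → ℕ)
    (hM : ∀ i j, M i j = 0 ∨ M i j = 1)
    (hsub : ¬ ∃ (R C : Finset (Fin N)), R.card = a ∧ C.card = a ∧
      ∀ i ∈ R, ∀ j ∈ C, M i j = 1) :
    (((Finset.univ : Finset (Fin N × Fin N)).filter
        fun q : Fin N × Fin N => M q.1 q.2 = 1).card : ℝ)
      ≤ (a - 1 : ℝ) ^ ((1 : ℝ) / a) * (N : ℝ) ^ ((2 : ℝ) - 1 / a) + (a - 1 : ℝ) * N := by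
  classical
  have ha2R : (2 : ℝ) ≤ (a : ℝ) := by exact_mod_cast ha
  have haR : (0 : ℝ) < (a : ℝ) := by linarith
  set ones : Fin N → Finset (Fin N) := fun j => Finset.univ.filter (fun i => M i j = 1)
    with hones
  set d : Fin N → ℕ := fun j => (ones j).card with hd
  -- Step 1: count of ones equals sum of column degrees
  have hdef : ∀ j, d j = ∑ i : Fin N, if M i j = 1 then 1 else 0 := fun j =>
    Finset.card_filter _ _
  have hT : (Finset.univ.filter fun q : Fin N × Fin N => M q.1 q.2 = 1).card = ∑ j, d j := by
    rw [Finset.card_filter, Fintype.sum_prod_type, Finset.sum_comm]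
    exact Finset.sum_congr rfl fun j _ => (hdef j).symm
  -- Step 2: each a-set of rows is contained in at most a-1 columns
  have hcols : ∀ S : Finset (Fin N), S.card = a →
      (Finset.univ.filter fun j => S ⊆ ones j).card ≤ a - 1 := by
    intro S hS
    by_contra h
    push_neg at h
    have hac : a ≤ (Finset.univ.filter fun j => S ⊆ ones j).card := by omega
    obtain ⟨C, hCsub, hCcard⟩ := Finset.exists_subset_card_eq hac
    refine hsub ⟨S, C, hS, hCcard, fun i hi j hj => ?_⟩
    have hj' := hCsub hj
    rw [Finset.mem_filter] at hj'
    have := hj'.2 hi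
    simpa [hones] using this
  -- Step 3: double counting
  have key : ∑ j, (d j).choose a ≤ (a - 1) * N.choose a := by
    calc ∑ j, (d j).choose a
        = ∑ j, ((Finset.univ.powersetCard a).filter fun S => S ⊆ ones j).card := by
          refine Finset.sum_congr rfl fun j _ => ?_
          rw [hd, ← Finset.card_powersetCard]
          congr 1
          ext S
          simp only [Finset.mem_powersetCard, Finset.mem_filter, Finset.subset_univ, true_and]
          tauto
      _ = ∑ S ∈ Finset.univ.powersetCard a, (Finset.univ.filter fun j => S ⊆ ones j).card := by
          simp_rw [Finset.card_filter]
          rw [Finset.sum_comm]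
      _ ≤ ∑ _S ∈ Finset.univ.powersetCard a, (a - 1) :=
          Finset.sum_le_sum fun S hS => hcols S (Finset.mem_powersetCard.mp hS).2
      _ = (a - 1) * N.choose a := by
          rw [Finset.sum_const, Finset.card_powersetCard, Finset.card_univ, Fintype.card_fin,
            smul_eq_mul, mul_comm]
  -- Step 4: truncated degrees
  set x : Fin N → ℕ := fun j => d j + 1 - a with hx
  have hxa : ∑ j, (x j) ^ a ≤ (a - 1) * N ^ a := by
    calc ∑ j, (x j) ^ a
        ≤ ∑ j, (d j).descFactorial a :=
          Finset.sum_le_sum fun j _ => Nat.pow_sub_le_descFactorial (d j) a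
      _ = ∑ j, Nat.factorial a * (d j).choose a := by
          simp_rw [Nat.descFactorial_eq_factorial_mul_choose]
      _ = Nat.factorial a * ∑ j, (d j).choose a := by rw [Finset.mul_sum]
      _ ≤ Nat.factorial a * ((a - 1) * N.choose a) := Nat.mul_le_mul_left _ key
      _ = (a - 1) * (Nat.factorial a * N.choose a) := by ring
      _ = (a - 1) * N.descFactorial a := by rw [Nat.descFactorial_eq_factorial_mul_choose]
      _ ≤ (a - 1) * N ^ a := Nat.mul_le_mul_left _ (Nat.descFactorial_le_pow N a)
  have hdx : ∑ j, d j ≤ (∑ j, x j) + (a - 1) * N := by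
    calc ∑ j, d j ≤ ∑ j, (x j + (a - 1)) := Finset.sum_le_sum fun j _ => by
          simp only [hx]; omega
      _ = (∑ j, x j) + (a - 1) * N := by
          rw [Finset.sum_add_distrib, Finset.sum_const, Finset.card_univ, Fintype.card_fin,
            smul_eq_mul, mul_comm]
  -- handle N = 0
  rcases Nat.eq_zero_or_pos N with hN | hN
  · subst hN
    have h2a : ((2 : ℝ) - 1 / a) ≠ 0 := by
      have : (1 : ℝ) / a ≤ 1 / 2 := by
        apply one_div_le_one_div_of_le <;> linarith
      intro h; rw [sub_eq_zero] at h; linarith [h.symm]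
    rw [hT]
    simp only [Nat.cast_zero, Finset.univ_eq_empty, Finset.sum_empty, Nat.cast_zero, mul_zero,
      add_zero, Real.zero_rpow h2a]
    exact le_rfl
  -- main case
  have hNR : (0 : ℝ) < (N : ℝ) := by exact_mod_cast hN
  set S : ℝ := ∑ j, (x j : ℝ) with hS
  have hSnn : 0 ≤ S := Finset.sum_nonneg fun j _ => by positivity
  have ha1R : (0 : ℝ) ≤ ((a - 1 : ℕ) : ℝ) := by positivity
  -- Jensen / power mean
  have hpm : S ^ a / (N : ℝ) ^ (a - 1) ≤ ∑ j, (x j : ℝ) ^ a := by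
    have := pow_sum_div_card_le_sum_pow
      (s := (Finset.univ : Finset (Fin N))) (f := fun j => (x j : ℝ))
      (fun i _ => by positivity) (a - 1)
    have hsucc : a - 1 + 1 = a := by omega
    rw [hsucc] at this
    simpa [Finset.card_univ] using this
  have hxaR : ∑ j, (x j : ℝ) ^ a ≤ ((a - 1 : ℕ) : ℝ) * (N : ℝ) ^ a := by
    have := hxa
    calc ∑ j, (x j : ℝ) ^ a = ((∑ j, (x j) ^ a : ℕ) : ℝ) := by push_cast; ring
      _ ≤ (((a - 1) * N ^ a : ℕ) : ℝ) := by exact_mod_cast hxa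
      _ = ((a - 1 : ℕ) : ℝ) * (N : ℝ) ^ a := by push_cast; ring
  have hSa : S ^ a ≤ ((a - 1 : ℕ) : ℝ) * (N : ℝ) ^ (2 * a - 1) := by
    have h1 : S ^ a ≤ (∑ j, (x j : ℝ) ^ a) * (N : ℝ) ^ (a - 1) := by
      rw [div_le_iff₀ (by positivity)] at hpm
      exact hpm
    calc S ^ a ≤ (((a - 1 : ℕ) : ℝ) * (N : ℝ) ^ a) * (N : ℝ) ^ (a - 1) := by
          refine h1.trans ?_
          gcongr
      _ = ((a - 1 : ℕ) : ℝ) * (N : ℝ) ^ (2 * a - 1) := by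
          rw [mul_assoc, ← pow_add]
          congr 2
          omega
  -- take a-th roots
  have hSle : S ≤ ((a - 1 : ℕ) : ℝ) ^ ((1 : ℝ) / a) * (N : ℝ) ^ ((2 : ℝ) - 1 / a) := by
    have hroot : S = (S ^ a) ^ ((1 : ℝ) / a) := by
      rw [← Real.rpow_natCast S a, ← Real.rpow_mul hSnn, mul_one_div, div_self (ne_of_gt haR),
        Real.rpow_one]
    rw [hroot]
    have hmono : (S ^ a) ^ ((1 : ℝ) / a)
        ≤ (((a - 1 : ℕ) : ℝ) * (N : ℝ) ^ (2 * a - 1)) ^ ((1 : ℝ) / a) :=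
      Real.rpow_le_rpow (by positivity) hSa (by positivity)
    refine hmono.trans_eq ?_
    rw [Real.mul_rpow ha1R (by positivity)]
    congr 1
    rw [← Real.rpow_natCast (N : ℝ) (2 * a - 1), ← Real.rpow_mul hNR.le]
    congr 1
    have hc : ((2 * a - 1 : ℕ) : ℝ) = 2 * (a : ℝ) - 1 := by
      push_cast [Nat.cast_sub (by omega : 1 ≤ 2 * a)]
      ring
    rw [hc]
    field_simp
  -- put everything together
  have hfin : ((∑ j, d j : ℕ) : ℝ) ≤ S + ((a - 1 : ℕ) : ℝ) * N := by
    calc ((∑ j, d j : ℕ) : ℝ) ≤ (((∑ j, x j) + (a - 1) * N : ℕ) : ℝ) := by exact_mod_cast hdx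
      _ = S + ((a - 1 : ℕ) : ℝ) * N := by push_cast [hS]; ring
  rw [hT]
  have hcast : ((a - 1 : ℕ) : ℝ) = (a : ℝ) - 1 := by
    push_cast [Nat.cast_sub (by omega : 1 ≤ a)]; ring
  calc ((∑ j, d j : ℕ) : ℝ) ≤ S + ((a - 1 : ℕ) : ℝ) * N := hfin
    _ ≤ ((a - 1 : ℕ) : ℝ) ^ ((1 : ℝ) / a) * (N : ℝ) ^ ((2 : ℝ) - 1 / a)
        + ((a - 1 : ℕ) : ℝ) * N := by gcongr
    _ = (a - 1 : ℝ) ^ ((1 : ℝ) / a) * (N : ℝ) ^ ((2 : ℝ) - 1 / a) + (a - 1 : ℝ) * N := by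
        rw [hcast]
end

section
/- Let G be a finite simple graph on N ≥ 1 vertices. Then the clique number of G satisfies ω(G) ≥ ∑_{v} 1/(N − deg(v)), where the sum is over all vertices v and deg(v) is the degree of v. -/
open Finset

/-- For a finite simple graph `G` on `N ≥ 1` vertices, the clique
number satisfies `ω(G) ≥ ∑_v 1/(N - deg(v))` (a Caro–Wei-type bound). -/
theorem caro_wei_clique_bound
    {V : Type*} [Fintype V] [DecidableEq V] (G : SimpleGraph V) [DecidableRel G.Adj]
    (N : ℕ) (hN : Fintype.card V = N) (hN1 : 1 ≤ N) :
    ∑ v : V, (1 : ℝ) / (N - G.degree v) ≤ (G.cliqueNum : ℝ) := by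
  classical
  -- closed non-neighborhood
  set A : V → Finset V := fun v => univ \ G.neighborFinset v with hA
  have hmemA : ∀ v u, u ∈ A v ↔ ¬ G.Adj v u := by
    intro v u; simp [hA]
  have hvA : ∀ v, v ∈ A v := fun v => (hmemA v v).2 (G.loopless.irrefl v)
  have hcardA : ∀ v, (A v).card = N - G.degree v := by
    intro v
    rw [hA]
    rw [card_sdiff_of_subset (subset_univ _), card_univ, hN, G.card_neighborFinset_eq_degree]
  have hdeg : ∀ v, G.degree v < N := by
    intro v; rw [← hN]; exact G.degree_lt_card_verts v
  -- permutations
  have hcardP : Fintype.card (V ≃ Fin N) = Nat.factorial N := by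
    rw [Fintype.card_equiv (Fintype.equivFinOfCardEq hN), hN]
  -- T v u : permutations where u is the strict minimum of σ on A v
  set T : V → V → Finset (V ≃ Fin N) := fun v u =>
    univ.filter (fun σ : V ≃ Fin N => ∀ a ∈ A v, a ≠ u → σ u < σ a) with hT
  -- swapping bijection : all fibers over A v have equal size
  have hswap : ∀ v, ∀ u ∈ A v, (T v u).card = (T v v).card := by
    intro v u hu
    apply Finset.card_bij (fun σ _ => (Equiv.swap v u).trans σ)
    · intro σ hσ
      simp only [hT, mem_filter, mem_univ, true_and] at hσ ⊢
      intro a ha hane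
      rcases eq_or_ne a u with rfl | hau
      · have := hσ v (hvA v) (Ne.symm hane)
        simpa [Equiv.trans_apply, Equiv.swap_apply_left, Equiv.swap_apply_right] using this
      · have := hσ a ha hau
        simpa [Equiv.trans_apply, Equiv.swap_apply_left,
          Equiv.swap_apply_of_ne_of_ne hane hau] using this
    · intro σ₁ _ σ₂ _ h
      apply Equiv.ext
      intro x
      have := congrArg (fun e : V ≃ Fin N => e (Equiv.swap v u x)) h
      simpa [Equiv.trans_apply, Equiv.swap_apply_self] using this
    · intro σ hσ
      refine ⟨(Equiv.swap v u).trans σ, ?_, ?_⟩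
      · simp only [hT, mem_filter, mem_univ, true_and] at hσ ⊢
        intro a ha hane
        rcases eq_or_ne a v with rfl | hav
        · have := hσ u hu (Ne.symm hane)
          simpa [Equiv.trans_apply, Equiv.swap_apply_left, Equiv.swap_apply_right] using this
        · have := hσ a ha hav
          simpa [Equiv.trans_apply, Equiv.swap_apply_left,
            Equiv.swap_apply_of_ne_of_ne hav hane] using this
      · apply Equiv.ext
        intro x
        simp [Equiv.trans_apply, Equiv.swap_apply_self]
  -- partition : the fibers over A v partition all permutations
  have hpart : ∀ v, ∑ u ∈ A v, (T v u).card = Nat.factorial N := by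
    intro v
    have huniq : ∀ σ : V ≃ Fin N,
        ((A v).filter (fun u => ∀ a ∈ A v, a ≠ u → σ u < σ a)).card = 1 := by
      intro σ
      obtain ⟨u, hu, humin⟩ := Finset.exists_min_image (A v) σ ⟨v, hvA v⟩
      rw [Finset.card_eq_one]
      refine ⟨u, ?_⟩
      ext w
      simp only [mem_filter, mem_singleton]
      constructor
      · rintro ⟨hw, hwmin⟩
        by_contra hwu
        exact absurd (hwmin u hu (fun h => hwu h.symm)) (not_lt.2 (humin w hw))
      · rintro rfl
        refine ⟨hu, fun a ha hane => lt_of_le_of_ne (humin a ha) ?_⟩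
        exact fun h => hane (σ.injective h).symm
    calc ∑ u ∈ A v, (T v u).card
        = ∑ u ∈ A v, ∑ σ : V ≃ Fin N, (if ∀ a ∈ A v, a ≠ u → σ u < σ a then 1 else 0) := by
          refine Finset.sum_congr rfl fun u _ => ?_
          simp only [hT]
          exact Finset.card_filter _ _
      _ = ∑ σ : V ≃ Fin N, ∑ u ∈ A v, (if ∀ a ∈ A v, a ≠ u → σ u < σ a then 1 else 0) :=
          Finset.sum_comm
      _ = ∑ _σ : V ≃ Fin N, 1 := by
          refine Finset.sum_congr rfl fun σ _ => ?_
          rw [← Finset.card_filter]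
          exact huniq σ
      _ = Nat.factorial N := by simp [hcardP]
  -- hence (T v v).card * (N - deg v) = N!
  have hkey : ∀ v, (T v v).card * (N - G.degree v) = Nat.factorial N := by
    intro v
    have := hpart v
    rwa [Finset.sum_congr rfl (hswap v), Finset.sum_const, smul_eq_mul, hcardA,
      mul_comm] at this
  -- the selected set for each σ is a clique
  have hclique : ∀ σ : V ≃ Fin N,
      ∑ v : V, (if σ ∈ T v v then 1 else 0) ≤ G.cliqueNum := by
    intro σ
    have hc : (univ.filter (fun v => σ ∈ T v v)).card ≤ G.cliqueNum := by
      apply SimpleGraph.IsClique.card_le_cliqueNum (tc := ?_)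
      intro v hv w hw hvw
      simp only [Finset.coe_filter, Set.mem_setOf_eq, hT, mem_filter, mem_univ,
        true_and] at hv hw
      by_contra hadj
      have hwv : w ∈ A v := (hmemA v w).2 hadj
      have hvw' : v ∈ A w := (hmemA w v).2 (fun h => hadj h.symm)
      exact absurd (hw v hvw' hvw) (not_lt.2 (le_of_lt (hv w hwv (Ne.symm hvw))))
    calc ∑ v : V, (if σ ∈ T v v then 1 else 0)
        = (univ.filter (fun v => σ ∈ T v v)).card := (Finset.card_filter _ _).symm
      _ ≤ G.cliqueNum := hc
  -- double counting
  have hdouble : ∑ v : V, (T v v).card ≤ Nat.factorial N * G.cliqueNum := by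
    calc ∑ v : V, (T v v).card
        = ∑ v : V, ∑ σ : V ≃ Fin N, (if σ ∈ T v v then 1 else 0) := by
          refine Finset.sum_congr rfl fun v _ => ?_
          simp [Finset.card_filter]
      _ = ∑ σ : V ≃ Fin N, ∑ v : V, (if σ ∈ T v v then 1 else 0) := Finset.sum_comm
      _ ≤ ∑ _σ : V ≃ Fin N, G.cliqueNum := Finset.sum_le_sum fun σ _ => hclique σ
      _ = Nat.factorial N * G.cliqueNum := by simp [hcardP, mul_comm]
  -- translate to reals
  have hfacpos : (0 : ℝ) < Nat.factorial N := by positivity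
  have hterm : ∀ v : V, (1 : ℝ) / (N - G.degree v) = ((T v v).card : ℝ) / Nat.factorial N := by
    intro v
    have hsub : ((N - G.degree v : ℕ) : ℝ) = (N : ℝ) - G.degree v :=
      Nat.cast_sub (le_of_lt (hdeg v))
    have hpos : (0 : ℝ) < (N : ℝ) - G.degree v := by
      rw [← hsub]
      exact_mod_cast Nat.sub_pos_of_lt (hdeg v)
    have h' : ((T v v).card : ℝ) * ((N : ℝ) - G.degree v) = Nat.factorial N := by
      rw [← hsub]; exact_mod_cast hkey v
    rw [div_eq_div_iff hpos.ne' hfacpos.ne']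
    linarith [h']
  calc ∑ v : V, (1 : ℝ) / (N - G.degree v)
      = (∑ v : V, ((T v v).card : ℝ)) / Nat.factorial N := by
        rw [Finset.sum_div]; exact Finset.sum_congr rfl fun v _ => hterm v
    _ ≤ (Nat.factorial N * G.cliqueNum) / Nat.factorial N := by
        gcongr
        exact_mod_cast hdouble
    _ = G.cliqueNum := by field_simp
end

section
/- Let G be a finite simple graph on N vertices and let π be a linear ordering of the vertices. Define C_π to be the set of vertices v such that every vertex preceding v in the order π is adjacent to v. Then (a) C_π is a clique of G, and (b) if π is chosen uniformly at random among all N! linear orderings, the probability that a fixed vertex v belongs to C_π equals 1/(N − deg(v)), and hence the expected size of C_π equals ∑_{v} 1/(N − deg(v)). -/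
section Aux

variable {V : Type*} [Fintype V] [DecidableEq V] (G : SimpleGraph V) [DecidableRel G.Adj]
  (N : ℕ)

/-- The set of non-neighbors of `v` (including `v` itself). -/
private def Sv (v : V) : Finset V := Finset.univ.filter fun u => ¬ G.Adj u v

/-- Permutations in which `w` is the minimum of `Sv G v`. -/
private def Aw (v w : V) : Finset (V ≃ Fin N) :=
  Finset.univ.filter fun π => ∀ u ∈ Sv G v, u ≠ w → π w < π u

private lemma mem_Sv_self (v : V) : v ∈ Sv G v := by
  simp [Sv]

private lemma card_Sv (v : V) (hN : Fintype.card V = N) :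
    (Sv G v).card + G.degree v = N := by
  have h1 : G.neighborFinset v = Finset.univ.filter fun u => G.Adj u v := by
    ext u; simp [G.adj_comm]
  have := Finset.card_filter_add_card_filter_not
    (s := (Finset.univ : Finset V)) (p := fun u => G.Adj u v)
  rw [← hN]
  simp only [Finset.card_univ] at this
  rw [← this, ← G.card_neighborFinset_eq_degree, h1, Sv, add_comm]

private lemma card_Aw (v : V) (w : V) (hw : w ∈ Sv G v) :
    (Aw G N v w).card = (Aw G N v v).card := by
  apply Finset.card_bij' (fun π _ => (Equiv.swap v w).trans π)
    (fun π _ => (Equiv.swap v w).trans π)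
  · intro π hπ
    simp only [Aw, Finset.mem_filter, Finset.mem_univ, true_and] at hπ ⊢
    intro u hu huv
    simp only [Equiv.trans_apply]
    rw [Equiv.swap_apply_left]
    by_cases huw : u = w
    · subst huw
      rw [Equiv.swap_apply_right]
      exact hπ v (mem_Sv_self G v) (Ne.symm huv)
    · rw [Equiv.swap_apply_of_ne_of_ne huv huw]
      exact hπ u hu huw
  · intro π hπ
    simp only [Aw, Finset.mem_filter, Finset.mem_univ, true_and] at hπ ⊢
    intro u hu huw
    simp only [Equiv.trans_apply]
    rw [Equiv.swap_apply_right]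
    by_cases huv : u = v
    · subst huv
      rw [Equiv.swap_apply_left]
      exact hπ w hw (Ne.symm huw)
    · rw [Equiv.swap_apply_of_ne_of_ne huv huw]
      exact hπ u hu huv
  · intro π _
    ext x
    simp [Equiv.trans_apply]
  · intro π _
    ext x
    simp [Equiv.trans_apply]

private lemma sum_Aw (v : V) :
    ∑ w ∈ Sv G v, (Aw G N v w).card = Fintype.card (V ≃ Fin N) := by
  rw [← Finset.card_univ, ← Finset.card_biUnion]
  · congr 1
    apply Finset.eq_univ_iff_forall.mpr
    intro π
    obtain ⟨w, hw, hmin⟩ := Finset.exists_min_image (Sv G v) (fun u => π u)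
      ⟨v, mem_Sv_self G v⟩
    refine Finset.mem_biUnion.mpr ⟨w, hw, ?_⟩
    simp only [Aw, Finset.mem_filter, Finset.mem_univ, true_and]
    intro u hu huw
    exact lt_of_le_of_ne (hmin u hu) (fun h => huw (π.injective h.symm))
  · intro w hw w' hw' hne
    simp only [Finset.disjoint_left]
    intro π hπ hπ'
    simp only [Aw, Finset.mem_filter, Finset.mem_univ, true_and] at hπ hπ'
    exact absurd (hπ w' hw' (Ne.symm hne)) (not_lt.mpr (hπ' w hw hne).le)

private lemma key_count (v : V) :
    (Aw G N v v).card * (Sv G v).card = Fintype.card (V ≃ Fin N) := by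
  rw [← sum_Aw G N v]
  rw [Finset.sum_congr rfl (fun w hw => card_Aw G N v w hw)]
  rw [Finset.sum_const, smul_eq_mul, mul_comm]

end Aux

/-- For a finite simple graph `G` on `N` vertices and a linear ordering
`π` of the vertices (modeled as a bijection `V ≃ Fin N`, with `u` preceding `v` iff
`π u < π v`), let `C_π` be the set of vertices `v` such that every vertex preceding `v`
is adjacent to `v`. Then (a) `C_π` is a clique; (b) for `π` uniform among all `N!`
orderings, the probability that a fixed vertex `v` lies in `C_π` equals
`1/(N - deg v)`; and hence (c) the expected size of `C_π` equals `∑_v 1/(N - deg v)`. -/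
theorem random_permutation_clique
    {V : Type*} [Fintype V] [DecidableEq V] (G : SimpleGraph V) [DecidableRel G.Adj]
    (N : ℕ) (hN : Fintype.card V = N)
    (C : (V ≃ Fin N) → Finset V)
    (hC : ∀ π : V ≃ Fin N,
      C π = Finset.univ.filter fun v : V => ∀ u : V, π u < π v → G.Adj u v) :
    (∀ π : V ≃ Fin N, G.IsClique (C π : Set V)) ∧
    (∀ v : V,
      ((Finset.univ.filter fun π : V ≃ Fin N => v ∈ C π).card : ℝ) /
          (Fintype.card (V ≃ Fin N) : ℝ) = 1 / ((N : ℝ) - G.degree v)) ∧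
    ((∑ π : V ≃ Fin N, ((C π).card : ℝ)) / (Fintype.card (V ≃ Fin N) : ℝ)
        = ∑ v : V, (1 : ℝ) / ((N : ℝ) - G.degree v)) := by
  have hCmem : ∀ π : V ≃ Fin N, ∀ v : V,
      v ∈ C π ↔ ∀ u : V, π u < π v → G.Adj u v := by
    intro π v
    rw [hC π, Finset.mem_filter]
    exact ⟨fun h => h.2, fun h => ⟨Finset.mem_univ v, h⟩⟩
  have hfilter : ∀ v : V,
      (Finset.univ.filter fun π : V ≃ Fin N => v ∈ C π) = Aw G N v v := by
    intro v
    ext π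
    simp only [Finset.mem_filter, Finset.mem_univ, true_and, Aw, hCmem π v, Sv]
    constructor
    · intro h u hu huv
      rcases lt_trichotomy (π v) (π u) with h1 | h1 | h1
      · exact h1
      · exact absurd (π.injective h1) (Ne.symm huv)
      · exact absurd (h u h1) hu
    · intro h u hu
      by_contra hadj
      have huv : u ≠ v := by rintro rfl; exact lt_irrefl _ hu
      have := h u (by simp [hadj]) huv
      exact absurd hu (not_lt.mpr this.le)
  have hcardSv : ∀ v : V, ((Sv G v).card : ℝ) = (N : ℝ) - G.degree v := by
    intro v
    have := card_Sv G N v hN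
    have : ((Sv G v).card : ℝ) + G.degree v = N := by exact_mod_cast congrArg Nat.cast this
    linarith
  have hSvpos : ∀ v : V, 0 < (Sv G v).card :=
    fun v => Finset.card_pos.mpr ⟨v, mem_Sv_self G v⟩
  have hPpos : 0 < Fintype.card (V ≃ Fin N) :=
    Fintype.card_pos_iff.mpr ⟨Fintype.equivFinOfCardEq hN⟩
  have partB : ∀ v : V,
      ((Finset.univ.filter fun π : V ≃ Fin N => v ∈ C π).card : ℝ) /
          (Fintype.card (V ≃ Fin N) : ℝ) = 1 / ((N : ℝ) - G.degree v) := by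
    intro v
    rw [hfilter v, ← hcardSv v]
    have hk := key_count G N v
    have hk' : ((Aw G N v v).card : ℝ) * (Sv G v).card = Fintype.card (V ≃ Fin N) := by
      exact_mod_cast congrArg Nat.cast hk
    have h1 : (0:ℝ) < (Sv G v).card := by exact_mod_cast hSvpos v
    have h2 : (0:ℝ) < Fintype.card (V ≃ Fin N) := by exact_mod_cast hPpos
    field_simp
    linarith [hk']
  refine ⟨?_, partB, ?_⟩
  · intro π u hu w hw hne
    rw [Finset.mem_coe, hCmem] at hu hw
    rcases lt_or_gt_of_ne (fun h : π u = π w => hne (π.injective h)) with h | h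
    · exact hw u h
    · exact (hu w h).symm
  · have : ∀ π : V ≃ Fin N, ((C π).card : ℝ) = ∑ v : V, if v ∈ C π then (1:ℝ) else 0 := by
      intro π
      rw [Finset.sum_ite_mem, Finset.univ_inter, Finset.sum_const, nsmul_eq_mul, mul_one]
    simp_rw [this]
    rw [Finset.sum_comm, Finset.sum_div]
    apply Finset.sum_congr rfl
    intro v _
    rw [← partB v]
    simp [Finset.sum_boole]
end
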